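/- Let L_x, L_y > 0 and let 𝒦² = {(2π n₁/L_x, 2π n₂/L_y) : n₁, n₂ ∈ ℤ} be the reciprocal lattice. Let q_1, …, q_N ∈ ℝ, let (ẋ_j, z_j) ∈ ℝ² × ℝ for j = 1, …, N, fix i ∈ {1, …, N}, and let w_ℓ > 0 and s_ℓ > 0 for ℓ = m+1, …, M, and K > 0. Then |Σ_{ℓ=m+1}^{M} w_ℓ s_ℓ² Σ_{k ∈ 𝒦², |k| > K} exp(-s_ℓ² |k|²/4) Σ_{j=1}^{N} q_j exp(i k·(ẋ_i - ẋ_j)) exp(-(z_i - z_j)²/s_ℓ²)| ≤ (Σ_{j=1}^{N} |q_j|) · Σ_{ℓ=m+1}^{M} w_ℓ s_ℓ² (1 + √2 L_x/(s_ℓ√π)) (1 + √2 L_y/(s_ℓ√π)) · exp(-s_ℓ² K²/8). -/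

import Mathlib

set_option maxHeartbeats 1000000

open Real MeasureTheory Set

lemma gauss_tail_nat (a : ℝ) (ha : 0 < a) :
    Summable (fun n : ℕ => Real.exp (-(a * ((n : ℝ) + 1) ^ 2))) ∧
    ∑' n : ℕ, Real.exp (-(a * ((n : ℝ) + 1) ^ 2)) ≤ Real.sqrt (Real.pi / a) / 2 := by
  have hsum : Summable (fun n : ℕ => Real.exp (-(a * ((n : ℝ) + 1) ^ 2))) := by
    apply Summable.of_nonneg_of_le (fun n => (Real.exp_pos _).le)
      (fun n => ?_) (summable_geometric_of_lt_one (Real.exp_nonneg (-a))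
        (Real.exp_lt_one_iff.mpr (by linarith)))
    rw [← Real.exp_nat_mul]
    apply Real.exp_le_exp.mpr
    have : (n : ℝ) ≤ ((n : ℝ) + 1) ^ 2 := by nlinarith [Nat.cast_nonneg (α := ℝ) n]
    nlinarith [Nat.cast_nonneg (α := ℝ) n]
  refine ⟨hsum, ?_⟩
  apply Real.tsum_le_of_sum_range_le (fun n => (Real.exp_pos _).le)
  intro n
  have hmono : AntitoneOn (fun x : ℝ => Real.exp (-(a * x ^ 2))) (Icc 0 (0 + (n : ℝ))) := by
    intro u hu v hv huv
    apply Real.exp_le_exp.mpr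
    have : u ^ 2 ≤ v ^ 2 := by nlinarith [hu.1]
    nlinarith
  have h1 := hmono.sum_le_integral
  simp only [zero_add] at h1
  have h2 : ∫ x in (0:ℝ)..(n:ℝ), Real.exp (-(a * x ^ 2)) =
      ∫ x in Ioc (0:ℝ) (n:ℝ), Real.exp (-(a * x ^ 2)) :=
    intervalIntegral.integral_of_le (Nat.cast_nonneg n)
  have hint : IntegrableOn (fun x : ℝ => Real.exp (-(a * x ^ 2))) (Ioi 0) := by
    have := (integrable_exp_neg_mul_sq ha).integrableOn (s := Ioi (0:ℝ))
    simpa [neg_mul] using this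
  have h3 : ∫ x in Ioc (0:ℝ) (n:ℝ), Real.exp (-(a * x ^ 2)) ≤
      ∫ x in Ioi (0:ℝ), Real.exp (-(a * x ^ 2)) := by
    apply setIntegral_mono_set hint
    · exact Filter.Eventually.of_forall (fun x => (Real.exp_pos _).le)
    · exact HasSubset.Subset.eventuallyLE Ioc_subset_Ioi_self
  have h4 : ∫ x in Ioi (0:ℝ), Real.exp (-(a * x ^ 2)) = Real.sqrt (Real.pi / a) / 2 := by
    simpa [neg_mul] using integral_gaussian_Ioi a
  calc ∑ i ∈ Finset.range n, Real.exp (-(a * ((i : ℝ) + 1) ^ 2))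
      = ∑ i ∈ Finset.range n, Real.exp (-(a * (((i + 1 : ℕ) : ℝ)) ^ 2)) := by
        apply Finset.sum_congr rfl; intro i _; push_cast; ring_nf
    _ ≤ ∫ x in (0:ℝ)..(n:ℝ), Real.exp (-(a * x ^ 2)) := h1
    _ ≤ Real.sqrt (Real.pi / a) / 2 := by rw [h2]; rw [← h4]; exact h3

lemma gauss_sum_int (a : ℝ) (ha : 0 < a) :
    Summable (fun n : ℤ => Real.exp (-(a * (n : ℝ) ^ 2))) ∧
    ∑' n : ℤ, Real.exp (-(a * (n : ℝ) ^ 2)) ≤ 1 + Real.sqrt (Real.pi / a) := by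
  obtain ⟨htail, hbound⟩ := gauss_tail_nat a ha
  have hnat' : Summable (fun n : ℕ => Real.exp (-(a * (n : ℝ) ^ 2))) := by
    apply Summable.of_nonneg_of_le (fun n => (Real.exp_pos _).le) (fun n => ?_)
      (summable_geometric_of_lt_one (Real.exp_nonneg (-a))
        (Real.exp_lt_one_iff.mpr (by linarith)))
    rw [← Real.exp_nat_mul]
    apply Real.exp_le_exp.mpr
    have hn : (n : ℝ) ≤ (n : ℝ) ^ 2 := by
      exact_mod_cast Nat.le_self_pow (by norm_num) n
    nlinarith
  have hnat : Summable (fun n : ℕ => Real.exp (-(a * ((n : ℤ) : ℝ) ^ 2))) := by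
    simpa using hnat'
  have hneg : (fun n : ℕ => Real.exp (-(a * (((-(n + 1) : ℤ)) : ℝ) ^ 2)))
      = fun n : ℕ => Real.exp (-(a * ((n : ℝ) + 1) ^ 2)) := by
    funext n; push_cast; ring_nf
  have hneg' : Summable (fun n : ℕ => Real.exp (-(a * (((-(n + 1) : ℤ)) : ℝ) ^ 2))) := by
    rw [hneg]; exact htail
  have hsum : Summable (fun n : ℤ => Real.exp (-(a * (n : ℝ) ^ 2))) :=
    Summable.of_nat_of_neg_add_one (f := fun n : ℤ => Real.exp (-(a * (n : ℝ) ^ 2))) hnat hneg'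
  refine ⟨hsum, ?_⟩
  rw [tsum_of_nat_of_neg_add_one (f := fun n : ℤ => Real.exp (-(a * (n : ℝ) ^ 2))) hnat hneg']
  have h0 : ∑' n : ℕ, Real.exp (-(a * ((n : ℤ) : ℝ) ^ 2))
      = 1 + ∑' n : ℕ, Real.exp (-(a * ((n : ℝ) + 1) ^ 2)) := by
    rw [Summable.tsum_eq_zero_add hnat]
    congr 1
    · norm_num
    · apply tsum_congr; intro n; push_cast; ring_nf
  rw [h0, hneg]
  linarith

lemma gauss_sum_prod (a b : ℝ) (ha : 0 < a) (hb : 0 < b) :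
    Summable (fun n : ℤ × ℤ => Real.exp (-(a * (n.1 : ℝ) ^ 2 + b * (n.2 : ℝ) ^ 2))) ∧
    ∑' n : ℤ × ℤ, Real.exp (-(a * (n.1 : ℝ) ^ 2 + b * (n.2 : ℝ) ^ 2)) ≤
      (1 + Real.sqrt (Real.pi / a)) * (1 + Real.sqrt (Real.pi / b)) := by
  obtain ⟨hsa, hba⟩ := gauss_sum_int a ha
  obtain ⟨hsb, hbb⟩ := gauss_sum_int b hb
  have hfa : Summable (fun x : ℤ => ‖Real.exp (-(a * (x : ℝ) ^ 2))‖) := by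
    simpa [Real.norm_eq_abs, abs_of_nonneg (Real.exp_pos _).le] using hsa
  have hgb : Summable (fun x : ℤ => ‖Real.exp (-(b * (x : ℝ) ^ 2))‖) := by
    simpa [Real.norm_eq_abs, abs_of_nonneg (Real.exp_pos _).le] using hsb
  have hfact : (fun n : ℤ × ℤ => Real.exp (-(a * (n.1 : ℝ) ^ 2 + b * (n.2 : ℝ) ^ 2)))
      = fun n : ℤ × ℤ => Real.exp (-(a * (n.1 : ℝ) ^ 2)) * Real.exp (-(b * (n.2 : ℝ) ^ 2)) := by
    funext n; rw [← Real.exp_add]; ring_nf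
  have hprod := tsum_mul_tsum_of_summable_norm hfa hgb
  have hsummul := summable_mul_of_summable_norm hfa hgb
  constructor
  · rw [hfact]; exact hsummul
  · have h1 : 0 ≤ ∑' x : ℤ, Real.exp (-(a * (x : ℝ) ^ 2)) :=
      tsum_nonneg (fun _ => (Real.exp_pos _).le)
    have h2 : 0 ≤ ∑' y : ℤ, Real.exp (-(b * (y : ℝ) ^ 2)) :=
      tsum_nonneg (fun _ => (Real.exp_pos _).le)
    calc ∑' n : ℤ × ℤ, Real.exp (-(a * (n.1 : ℝ) ^ 2 + b * (n.2 : ℝ) ^ 2))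
        = (∑' x : ℤ, Real.exp (-(a * (x : ℝ) ^ 2))) *
            ∑' y : ℤ, Real.exp (-(b * (y : ℝ) ^ 2)) := by rw [hfact, ← hprod]
      _ ≤ (1 + Real.sqrt (Real.pi / a)) * (1 + Real.sqrt (Real.pi / b)) :=
          mul_le_mul hba hbb h2 (by positivity)

lemma sqrt_pi_div_coef (L a : ℝ) (hL : 0 < L) (ha : 0 < a) :
    Real.sqrt (Real.pi / (a ^ 2 * Real.pi ^ 2 / (2 * L ^ 2)))
      = Real.sqrt 2 * L / (a * Real.sqrt Real.pi) := by
  have hpi := Real.pi_pos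
  have h2 : Real.pi / (a ^ 2 * Real.pi ^ 2 / (2 * L ^ 2))
      = (Real.sqrt 2 * L / (a * Real.sqrt Real.pi)) ^ 2 := by
    rw [div_pow, mul_pow, mul_pow, Real.sq_sqrt (by norm_num : (0:ℝ) ≤ 2),
      Real.sq_sqrt hpi.le]
    field_simp
  rw [h2, Real.sqrt_sq (by positivity)]

lemma inner_tsum_bound (Lx Ly : ℝ) (hLx : 0 < Lx) (hLy : 0 < Ly)
    (N : ℕ) (q : Fin N → ℝ) (c : Fin N → ℝ) (t : ℤ × ℤ → Fin N → ℝ)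
    (hc0 : ∀ j, 0 ≤ c j) (hc1 : ∀ j, c j ≤ 1)
    (a : ℝ) (ha : 0 < a) (K : ℝ) (hK : 0 < K) :
    ‖∑' n : {n : ℤ × ℤ //
          K < Real.sqrt ((2 * Real.pi * n.1 / Lx) ^ 2 + (2 * Real.pi * n.2 / Ly) ^ 2)},
        ((Real.exp (-(a ^ 2 *
            ((2 * Real.pi * n.1.1 / Lx) ^ 2 + (2 * Real.pi * n.1.2 / Ly) ^ 2) / 4)) : ℝ) : ℂ) *
          ∑ j, ((q j : ℝ) : ℂ) *
            Complex.exp (Complex.I * ((t n.1 j : ℝ) : ℂ)) *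
            ((c j : ℝ) : ℂ)‖ ≤
      (∑ j, |q j|) * ((1 + Real.sqrt 2 * Lx / (a * Real.sqrt Real.pi)) *
        ((1 + Real.sqrt 2 * Ly / (a * Real.sqrt Real.pi)) *
          Real.exp (-(a ^ 2 * K ^ 2 / 8)))) := by
  have hpi := Real.pi_pos
  set Q := ∑ j, |q j| with hQdef
  have hQ : 0 ≤ Q := Finset.sum_nonneg fun j _ => abs_nonneg _
  have ha1 : 0 < a ^ 2 * Real.pi ^ 2 / (2 * Lx ^ 2) := by positivity
  have ha2 : 0 < a ^ 2 * Real.pi ^ 2 / (2 * Ly ^ 2) := by positivity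
  obtain ⟨hGsum, hGbound⟩ := gauss_sum_prod _ _ ha1 ha2
  -- the bound family over the full lattice
  have hBfull : Summable (fun n : ℤ × ℤ => Q * (Real.exp (-(a ^ 2 * K ^ 2 / 8)) *
      Real.exp (-(a ^ 2 * Real.pi ^ 2 / (2 * Lx ^ 2) * (n.1 : ℝ) ^ 2 +
        a ^ 2 * Real.pi ^ 2 / (2 * Ly ^ 2) * (n.2 : ℝ) ^ 2)))) :=
    (hGsum.mul_left _).mul_left _
  have hBsub : Summable (fun n : {n : ℤ × ℤ //
      K < Real.sqrt ((2 * Real.pi * n.1 / Lx) ^ 2 + (2 * Real.pi * n.2 / Ly) ^ 2)} =>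
      Q * (Real.exp (-(a ^ 2 * K ^ 2 / 8)) *
      Real.exp (-(a ^ 2 * Real.pi ^ 2 / (2 * Lx ^ 2) * (n.1.1 : ℝ) ^ 2 +
        a ^ 2 * Real.pi ^ 2 / (2 * Ly ^ 2) * (n.1.2 : ℝ) ^ 2)))) :=
    hBfull.comp_injective Subtype.coe_injective
  -- pointwise bound
  have hterm : ∀ n : {n : ℤ × ℤ //
      K < Real.sqrt ((2 * Real.pi * n.1 / Lx) ^ 2 + (2 * Real.pi * n.2 / Ly) ^ 2)},
      ‖((Real.exp (-(a ^ 2 *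
            ((2 * Real.pi * n.1.1 / Lx) ^ 2 + (2 * Real.pi * n.1.2 / Ly) ^ 2) / 4)) : ℝ) : ℂ) *
          ∑ j, ((q j : ℝ) : ℂ) *
            Complex.exp (Complex.I * ((t n.1 j : ℝ) : ℂ)) *
            ((c j : ℝ) : ℂ)‖ ≤
      Q * (Real.exp (-(a ^ 2 * K ^ 2 / 8)) *
      Real.exp (-(a ^ 2 * Real.pi ^ 2 / (2 * Lx ^ 2) * (n.1.1 : ℝ) ^ 2 +
        a ^ 2 * Real.pi ^ 2 / (2 * Ly ^ 2) * (n.1.2 : ℝ) ^ 2))) := by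
    rintro ⟨n, hn⟩
    have hr0 : 0 ≤ (2 * Real.pi * (n.1 : ℝ) / Lx) ^ 2 + (2 * Real.pi * (n.2 : ℝ) / Ly) ^ 2 := by
      positivity
    have hr2 : K ^ 2 < (2 * Real.pi * (n.1 : ℝ) / Lx) ^ 2 + (2 * Real.pi * (n.2 : ℝ) / Ly) ^ 2 :=
      (Real.lt_sqrt hK.le).mp hn
    have hsumq : ‖∑ j, ((q j : ℝ) : ℂ) *
        Complex.exp (Complex.I * ((t n j : ℝ) : ℂ)) * ((c j : ℝ) : ℂ)‖ ≤ Q := by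
      refine le_trans (norm_sum_le _ _) (Finset.sum_le_sum fun j _ => ?_)
      have h1 : ‖Complex.exp (Complex.I * ((t n j : ℝ) : ℂ))‖ = 1 := by
        rw [mul_comm, Complex.norm_exp_ofReal_mul_I]
      rw [norm_mul, norm_mul, h1, Complex.norm_real, Complex.norm_real,
        Real.norm_eq_abs, Real.norm_eq_abs, abs_of_nonneg (hc0 j), mul_one]
      exact mul_le_of_le_one_right (abs_nonneg _) (hc1 j)
    have hexp : Real.exp (-(a ^ 2 *
        ((2 * Real.pi * (n.1 : ℝ) / Lx) ^ 2 + (2 * Real.pi * (n.2 : ℝ) / Ly) ^ 2) / 4)) ≤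
        Real.exp (-(a ^ 2 * K ^ 2 / 8)) *
        Real.exp (-(a ^ 2 * Real.pi ^ 2 / (2 * Lx ^ 2) * (n.1 : ℝ) ^ 2 +
          a ^ 2 * Real.pi ^ 2 / (2 * Ly ^ 2) * (n.2 : ℝ) ^ 2)) := by
      rw [← Real.exp_add]
      apply Real.exp_le_exp.mpr
      have hsplit : a ^ 2 * Real.pi ^ 2 / (2 * Lx ^ 2) * (n.1 : ℝ) ^ 2 +
          a ^ 2 * Real.pi ^ 2 / (2 * Ly ^ 2) * (n.2 : ℝ) ^ 2 =
          a ^ 2 * ((2 * Real.pi * (n.1 : ℝ) / Lx) ^ 2 + (2 * Real.pi * (n.2 : ℝ) / Ly) ^ 2) / 8 := by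
        field_simp
        ring
      rw [hsplit]
      have := mul_le_mul_of_nonneg_left hr2.le (by positivity : (0:ℝ) ≤ a ^ 2)
      linarith
    calc ‖((Real.exp (-(a ^ 2 *
            ((2 * Real.pi * (n.1 : ℝ) / Lx) ^ 2 + (2 * Real.pi * (n.2 : ℝ) / Ly) ^ 2) / 4)) : ℝ) : ℂ) *
          ∑ j, ((q j : ℝ) : ℂ) * Complex.exp (Complex.I * ((t n j : ℝ) : ℂ)) * ((c j : ℝ) : ℂ)‖
        = Real.exp (-(a ^ 2 *
            ((2 * Real.pi * (n.1 : ℝ) / Lx) ^ 2 + (2 * Real.pi * (n.2 : ℝ) / Ly) ^ 2) / 4)) *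
          ‖∑ j, ((q j : ℝ) : ℂ) * Complex.exp (Complex.I * ((t n j : ℝ) : ℂ)) * ((c j : ℝ) : ℂ)‖ := by
          rw [norm_mul, Complex.norm_real, Real.norm_eq_abs, abs_of_nonneg (Real.exp_pos _).le]
      _ ≤ (Real.exp (-(a ^ 2 * K ^ 2 / 8)) *
          Real.exp (-(a ^ 2 * Real.pi ^ 2 / (2 * Lx ^ 2) * (n.1 : ℝ) ^ 2 +
            a ^ 2 * Real.pi ^ 2 / (2 * Ly ^ 2) * (n.2 : ℝ) ^ 2))) * Q := by
          apply mul_le_mul hexp hsumq (norm_nonneg _) (by positivity)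
      _ = Q * (Real.exp (-(a ^ 2 * K ^ 2 / 8)) *
          Real.exp (-(a ^ 2 * Real.pi ^ 2 / (2 * Lx ^ 2) * (n.1 : ℝ) ^ 2 +
            a ^ 2 * Real.pi ^ 2 / (2 * Ly ^ 2) * (n.2 : ℝ) ^ 2))) := by ring
  -- summability of norms
  have hnormsum : Summable (fun n : {n : ℤ × ℤ //
      K < Real.sqrt ((2 * Real.pi * n.1 / Lx) ^ 2 + (2 * Real.pi * n.2 / Ly) ^ 2)} =>
      ‖((Real.exp (-(a ^ 2 *
            ((2 * Real.pi * n.1.1 / Lx) ^ 2 + (2 * Real.pi * n.1.2 / Ly) ^ 2) / 4)) : ℝ) : ℂ) *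
          ∑ j, ((q j : ℝ) : ℂ) *
            Complex.exp (Complex.I * ((t n.1 j : ℝ) : ℂ)) * ((c j : ℝ) : ℂ)‖) :=
    Summable.of_nonneg_of_le (fun _ => norm_nonneg _) hterm hBsub
  calc ‖∑' n : {n : ℤ × ℤ //
          K < Real.sqrt ((2 * Real.pi * n.1 / Lx) ^ 2 + (2 * Real.pi * n.2 / Ly) ^ 2)},
        ((Real.exp (-(a ^ 2 *
            ((2 * Real.pi * n.1.1 / Lx) ^ 2 + (2 * Real.pi * n.1.2 / Ly) ^ 2) / 4)) : ℝ) : ℂ) *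
          ∑ j, ((q j : ℝ) : ℂ) *
            Complex.exp (Complex.I * ((t n.1 j : ℝ) : ℂ)) * ((c j : ℝ) : ℂ)‖
      ≤ ∑' n : {n : ℤ × ℤ //
          K < Real.sqrt ((2 * Real.pi * n.1 / Lx) ^ 2 + (2 * Real.pi * n.2 / Ly) ^ 2)},
        ‖((Real.exp (-(a ^ 2 *
            ((2 * Real.pi * n.1.1 / Lx) ^ 2 + (2 * Real.pi * n.1.2 / Ly) ^ 2) / 4)) : ℝ) : ℂ) *
          ∑ j, ((q j : ℝ) : ℂ) *
            Complex.exp (Complex.I * ((t n.1 j : ℝ) : ℂ)) * ((c j : ℝ) : ℂ)‖ :=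
        norm_tsum_le_tsum_norm hnormsum
    _ ≤ ∑' n : {n : ℤ × ℤ //
          K < Real.sqrt ((2 * Real.pi * n.1 / Lx) ^ 2 + (2 * Real.pi * n.2 / Ly) ^ 2)},
        Q * (Real.exp (-(a ^ 2 * K ^ 2 / 8)) *
          Real.exp (-(a ^ 2 * Real.pi ^ 2 / (2 * Lx ^ 2) * (n.1.1 : ℝ) ^ 2 +
            a ^ 2 * Real.pi ^ 2 / (2 * Ly ^ 2) * (n.1.2 : ℝ) ^ 2))) :=
        Summable.tsum_le_tsum hterm hnormsum hBsub
    _ ≤ Q * ((1 + Real.sqrt 2 * Lx / (a * Real.sqrt Real.pi)) *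
        ((1 + Real.sqrt 2 * Ly / (a * Real.sqrt Real.pi)) *
          Real.exp (-(a ^ 2 * K ^ 2 / 8)))) := by
        rw [tsum_mul_left, tsum_mul_left]
        have hsub_le : ∑' n : {n : ℤ × ℤ //
            K < Real.sqrt ((2 * Real.pi * n.1 / Lx) ^ 2 + (2 * Real.pi * n.2 / Ly) ^ 2)},
            Real.exp (-(a ^ 2 * Real.pi ^ 2 / (2 * Lx ^ 2) * (n.1.1 : ℝ) ^ 2 +
              a ^ 2 * Real.pi ^ 2 / (2 * Ly ^ 2) * (n.1.2 : ℝ) ^ 2)) ≤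
            ∑' n : ℤ × ℤ, Real.exp (-(a ^ 2 * Real.pi ^ 2 / (2 * Lx ^ 2) * (n.1 : ℝ) ^ 2 +
              a ^ 2 * Real.pi ^ 2 / (2 * Ly ^ 2) * (n.2 : ℝ) ^ 2)) :=
          Summable.tsum_subtype_le (fun n : ℤ × ℤ =>
              Real.exp (-(a ^ 2 * Real.pi ^ 2 / (2 * Lx ^ 2) * (n.1 : ℝ) ^ 2 +
                a ^ 2 * Real.pi ^ 2 / (2 * Ly ^ 2) * (n.2 : ℝ) ^ 2)))
            {n : ℤ × ℤ |
              K < Real.sqrt ((2 * Real.pi * n.1 / Lx) ^ 2 + (2 * Real.pi * n.2 / Ly) ^ 2)}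
            (fun n => (Real.exp_pos _).le) hGsum
        have hfinal : ∑' n : ℤ × ℤ, Real.exp (-(a ^ 2 * Real.pi ^ 2 / (2 * Lx ^ 2) * (n.1 : ℝ) ^ 2 +
              a ^ 2 * Real.pi ^ 2 / (2 * Ly ^ 2) * (n.2 : ℝ) ^ 2)) ≤
            (1 + Real.sqrt 2 * Lx / (a * Real.sqrt Real.pi)) *
            (1 + Real.sqrt 2 * Ly / (a * Real.sqrt Real.pi)) := by
          calc _ ≤ (1 + Real.sqrt (Real.pi / (a ^ 2 * Real.pi ^ 2 / (2 * Lx ^ 2)))) *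
              (1 + Real.sqrt (Real.pi / (a ^ 2 * Real.pi ^ 2 / (2 * Ly ^ 2)))) := hGbound
            _ = _ := by rw [sqrt_pi_div_coef Lx a hLx ha, sqrt_pi_div_coef Ly a hLy ha]
        have hEpos : (0:ℝ) < Real.exp (-(a ^ 2 * K ^ 2 / 8)) := Real.exp_pos _
        have h1 : (0:ℝ) ≤ 1 + Real.sqrt 2 * Lx / (a * Real.sqrt Real.pi) := by positivity
        have h2 : (0:ℝ) ≤ 1 + Real.sqrt 2 * Ly / (a * Real.sqrt Real.pi) := by positivity
        have := mul_le_mul_of_nonneg_left (le_trans hsub_le hfinal) hEpos.le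
        have := mul_le_mul_of_nonneg_left this hQ
        calc Q * (Real.exp (-(a ^ 2 * K ^ 2 / 8)) * ∑' n : {n : ℤ × ℤ //
            K < Real.sqrt ((2 * Real.pi * n.1 / Lx) ^ 2 + (2 * Real.pi * n.2 / Ly) ^ 2)},
            Real.exp (-(a ^ 2 * Real.pi ^ 2 / (2 * Lx ^ 2) * (n.1.1 : ℝ) ^ 2 +
              a ^ 2 * Real.pi ^ 2 / (2 * Ly ^ 2) * (n.1.2 : ℝ) ^ 2)))
            ≤ Q * (Real.exp (-(a ^ 2 * K ^ 2 / 8)) *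
              ((1 + Real.sqrt 2 * Lx / (a * Real.sqrt Real.pi)) *
               (1 + Real.sqrt 2 * Ly / (a * Real.sqrt Real.pi)))) := this
          _ = Q * ((1 + Real.sqrt 2 * Lx / (a * Real.sqrt Real.pi)) *
              ((1 + Real.sqrt 2 * Ly / (a * Real.sqrt Real.pi)) *
                Real.exp (-(a ^ 2 * K ^ 2 / 8)))) := by ring

/-- Explicit-constant Fourier-truncation estimate for the long-range part of the
spectral sum-of-Gaussians solver: truncating the reciprocal-lattice sum in the
closed-form long-range potential at `|k| ≤ K` incurs an error bounded by
`(Σ_j |q_j|) Σ_ℓ w_ℓ s_ℓ² (1 + √2L_x/(s_ℓ√π))(1 + √2L_y/(s_ℓ√π)) e^{-s_ℓ²K²/8}`. -/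
theorem long_range_fourier_truncation_bound (Lx Ly : ℝ) (hLx : 0 < Lx) (hLy : 0 < Ly)
    (N : ℕ) (q : Fin N → ℝ) (x : Fin N → ℝ × ℝ) (z : Fin N → ℝ) (i : Fin N)
    (m M : ℕ) (w s : ℕ → ℝ)
    (hw : ∀ ℓ ∈ Finset.Icc (m + 1) M, 0 < w ℓ)
    (hs : ∀ ℓ ∈ Finset.Icc (m + 1) M, 0 < s ℓ)
    (K : ℝ) (hK : 0 < K) :
    ‖(∑ ℓ ∈ Finset.Icc (m + 1) M, ((w ℓ * (s ℓ) ^ 2 : ℝ) : ℂ) *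
      ∑' n : {n : ℤ × ℤ //
          K < Real.sqrt ((2 * Real.pi * n.1 / Lx) ^ 2 + (2 * Real.pi * n.2 / Ly) ^ 2)},
        ((Real.exp (-((s ℓ) ^ 2 *
            ((2 * Real.pi * n.1.1 / Lx) ^ 2 + (2 * Real.pi * n.1.2 / Ly) ^ 2) / 4)) : ℝ) : ℂ) *
          ∑ j, ((q j : ℝ) : ℂ) *
            Complex.exp (Complex.I *
              (((2 * Real.pi * n.1.1 / Lx) * ((x i).1 - (x j).1) +
                (2 * Real.pi * n.1.2 / Ly) * ((x i).2 - (x j).2) : ℝ) : ℂ)) *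
            ((Real.exp (-((z i - z j) ^ 2 / (s ℓ) ^ 2)) : ℝ) : ℂ))‖ ≤
      (∑ j, |q j|) * ∑ ℓ ∈ Finset.Icc (m + 1) M,
        w ℓ * (s ℓ) ^ 2 * (1 + Real.sqrt 2 * Lx / (s ℓ * Real.sqrt Real.pi)) *
          (1 + Real.sqrt 2 * Ly / (s ℓ * Real.sqrt Real.pi)) *
          Real.exp (-((s ℓ) ^ 2 * K ^ 2 / 8)) := by
  have hQ : 0 ≤ ∑ j, |q j| := Finset.sum_nonneg fun j _ => abs_nonneg _
  refine le_trans (norm_sum_le _ _) ?_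
  rw [Finset.mul_sum]
  refine Finset.sum_le_sum fun ℓ hℓ => ?_
  have hsl := hs ℓ hℓ
  have hwl := hw ℓ hℓ
  have hT := inner_tsum_bound Lx Ly hLx hLy N q
    (fun j => Real.exp (-((z i - z j) ^ 2 / (s ℓ) ^ 2)))
    (fun n j => (2 * Real.pi * n.1 / Lx) * ((x i).1 - (x j).1) +
      (2 * Real.pi * n.2 / Ly) * ((x i).2 - (x j).2))
    (fun j => (Real.exp_pos _).le)
    (fun j => Real.exp_le_one_iff.mpr (neg_nonpos.mpr (by positivity)))
    (s ℓ) hsl K hK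
  rw [norm_mul, Complex.norm_real, Real.norm_eq_abs, abs_of_pos (by positivity)]
  calc w ℓ * (s ℓ) ^ 2 * ‖_‖ ≤ w ℓ * (s ℓ) ^ 2 *
      ((∑ j, |q j|) * ((1 + Real.sqrt 2 * Lx / (s ℓ * Real.sqrt Real.pi)) *
        ((1 + Real.sqrt 2 * Ly / (s ℓ * Real.sqrt Real.pi)) *
          Real.exp (-((s ℓ) ^ 2 * K ^ 2 / 8))))) :=
      mul_le_mul_of_nonneg_left hT (by positivity)
    _ = (∑ j, |q j|) * (w ℓ * (s ℓ) ^ 2 *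
        (1 + Real.sqrt 2 * Lx / (s ℓ * Real.sqrt Real.pi)) *
        (1 + Real.sqrt 2 * Ly / (s ℓ * Real.sqrt Real.pi)) *
        Real.exp (-((s ℓ) ^ 2 * K ^ 2 / 8))) := by ring
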